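/- On the Cartesian torus grid, let W_{ij} ∈ L¹(T^d) for i,j = 1,…,n and define the discrete kernels W^{ij}_{KJ} by cell averages. (i) If W_{ij}(x) = W_{ji}(−x) for a.e. x ∈ T^d, then W^{ij}_{KJ} = W^{ji}_{JK} for all cells K, J ∈ G. (ii) If ∑_{i,j=1}^n ∫_{T^d}∫_{T^d} W_{ij}(x−y)·v_i(x)·v_j(y) dx dy ≥ 0 for all v_1,…,v_n ∈ L²(T^d), then for all families v_i : G → ℝ (i = 1,…,n): ∑_{i,j=1}^n ∑_{K,J∈G} m(K)·m(J)·W^{ij}_{KJ}·v_i(K)·v_j(J) ≥ 0. -/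

import Mathlib

open MeasureTheory Real Finset

namespace SG

instance : Fact ((0:ℝ) < 1) := ⟨one_pos⟩

variable {d : ℕ}

/-- Cells of the Cartesian torus grid. -/
abbrev Cell (M : Fin d → ℕ) := ∀ ℓ : Fin d, ZMod (M ℓ)

/-- Cell measure `m(K) = Δx₁⋯Δx_d`. -/
noncomputable def mK (M : Fin d → ℕ) : ℝ := ∏ ℓ, ((M ℓ : ℝ))⁻¹

/-- Transmissibility coefficient of an edge in direction `ℓ`:
`τ_σ = m(σ)/d_σ = m(K)·M_ℓ²`. -/
noncomputable def τ (M : Fin d → ℕ) (ℓ : Fin d) : ℝ := mK M * (M ℓ : ℝ) ^ 2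

/-- Shift a cell by `s` in direction `ℓ` (mod `M ℓ`). -/
def shift (M : Fin d → ℕ) (K : Cell M) (ℓ : Fin d) (s : ℤ) : Cell M :=
  Function.update K ℓ (K ℓ + (s : ZMod (M ℓ)))

/-- Hypothesis (H2): `B` is continuous on `[0,∞)` with `0 < B(s) ≤ 1` for `s ≥ 0`. -/
def H2 (B : ℝ → ℝ) : Prop :=
  ContinuousOn B (Set.Ici 0) ∧ ∀ s : ℝ, 0 ≤ s → 0 < B s ∧ B s ≤ 1

/-- Hypothesis (H3): `α ∈ [0,1)` and `B(s) ≥ 1 − α·s` for all `s ≥ 0`. -/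
def H3 (B : ℝ → ℝ) (α : ℝ) : Prop :=
  0 ≤ α ∧ α < 1 ∧ ∀ s : ℝ, 0 ≤ s → 1 - α * s ≤ B s

/-- The scaled weight function `B_κ(s) = κ·B(s/κ)`. -/
noncomputable def Bk (κ : ℝ) (B : ℝ → ℝ) (s : ℝ) : ℝ := κ * B (s / κ)

/-- Upwind value on the (oriented) edge from `K` to `L`. -/
noncomputable def upw {M : Fin d → ℕ} (u p : Cell M → ℝ) (K L : Cell M) : ℝ :=
  if 0 ≤ p L - p K then u L else u K

/-- Numerical flux `F_{K,σ}[u,p]` from `K` through the edge (in direction `ℓ`) to its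
neighbor `L`. -/
noncomputable def flux (M : Fin d → ℕ) (κ : ℝ) (B : ℝ → ℝ) (u p : Cell M → ℝ)
    (ℓ : Fin d) (K L : Cell M) : ℝ :=
  -(τ M ℓ) * (Bk κ B |p L - p K| * (u L - u K) + upw u p K L * (p L - p K))

/-- Sum of the numerical fluxes over the `2d` edges incident to `K`. -/
noncomputable def fluxSum (M : Fin d → ℕ) (κ : ℝ) (B : ℝ → ℝ) (u p : Cell M → ℝ)
    (K : Cell M) : ℝ :=
  ∑ ℓ : Fin d, (flux M κ B u p ℓ K (shift M K ℓ 1) + flux M κ B u p ℓ K (shift M K ℓ (-1)))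

/-- One implicit Euler finite-volume step with prescribed potential `p`. -/
def Step (M : Fin d → ℕ) (κ Δt : ℝ) (B : ℝ → ℝ) (uPrev u p : Cell M → ℝ) : Prop :=
  ∀ K : Cell M, mK M * (u K - uPrev K) / Δt + fluxSum M κ B u p K = 0

/-- Discrete Boltzmann entropy. -/
noncomputable def HB (M : Fin d → ℕ) [∀ ℓ, NeZero (M ℓ)] {n : ℕ}
    (u : Fin n → Cell M → ℝ) : ℝ :=
  ∑ i, ∑ K : Cell M, mK M * (u i K * (Real.log (u i K) - 1))

/-- Discrete Rao entropy associated to discrete kernels `Wd`. -/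
noncomputable def HR (M : Fin d → ℕ) [∀ ℓ, NeZero (M ℓ)] {n : ℕ}
    (Wd : Fin n → Fin n → Cell M → Cell M → ℝ) (u : Fin n → Cell M → ℝ) : ℝ :=
  (1/2) * ∑ i, ∑ j, ∑ K : Cell M, ∑ J : Cell M,
    mK M * mK M * Wd i j K J * u i K * u j J

/-- Boltzmann entropy production term `P_B`. -/
noncomputable def PB (M : Fin d → ℕ) [∀ ℓ, NeZero (M ℓ)] {n : ℕ} (κ : ℝ) (B : ℝ → ℝ)
    (u p : Fin n → Cell M → ℝ) : ℝ :=
  4 * ∑ i, ∑ K : Cell M, ∑ ℓ : Fin d,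
    τ M ℓ * Bk κ B |p i (shift M K ℓ 1) - p i K| *
      (Real.sqrt (u i (shift M K ℓ 1)) - Real.sqrt (u i K)) ^ 2

/-- Rao entropy production term `P_R`. -/
noncomputable def PR (M : Fin d → ℕ) [∀ ℓ, NeZero (M ℓ)] {n : ℕ}
    (u p : Fin n → Cell M → ℝ) : ℝ :=
  ∑ i, ∑ K : Cell M, ∑ ℓ : Fin d,
    τ M ℓ * upw (u i) (p i) K (shift M K ℓ 1) * (p i (shift M K ℓ 1) - p i K) ^ 2

/-- Cross term `X(u,p)`. -/
noncomputable def Xc (M : Fin d → ℕ) [∀ ℓ, NeZero (M ℓ)] {n : ℕ}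
    (u p : Fin n → Cell M → ℝ) : ℝ :=
  ∑ i, ∑ K : Cell M, ∑ ℓ : Fin d,
    τ M ℓ * (p i (shift M K ℓ 1) - p i K) * (u i (shift M K ℓ 1) - u i K)

/-- Discrete Fisher information `∑_i ∑_σ τ_σ |D_σ √u_i|²`. -/
noncomputable def Fisher (M : Fin d → ℕ) [∀ ℓ, NeZero (M ℓ)] {n : ℕ}
    (u : Fin n → Cell M → ℝ) : ℝ :=
  ∑ i, ∑ K : Cell M, ∑ ℓ : Fin d,
    τ M ℓ * (Real.sqrt (u i (shift M K ℓ 1)) - Real.sqrt (u i K)) ^ 2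

/-- The torus `T^d = (ℝ/ℤ)^d`. -/
abbrev Td (d : ℕ) := Fin d → AddCircle (1 : ℝ)

/-- The box `Q_K ⊆ T^d` corresponding to the cell `K`. -/
noncomputable def QK (M : Fin d → ℕ) (K : Cell M) : Set (Td d) :=
  Set.univ.pi fun ℓ => (fun t : ℝ => (t : AddCircle (1 : ℝ))) ''
    Set.Ico (((K ℓ).val : ℝ) / (M ℓ)) ((((K ℓ).val : ℝ) + 1) / (M ℓ))

/-- The discrete kernel `W_{KJ} = (m(K)m(J))⁻¹ ∫_{Q_K}∫_{Q_J} W(x−y) dy dx`. -/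
noncomputable def Wdisc (M : Fin d → ℕ) (W : Td d → ℝ) (K J : Cell M) : ℝ :=
  (mK M * mK M)⁻¹ * ∫ x in QK M K, ∫ y in QK M J, W (x - y)

/-- The discrete nonlocal potential `p_i(K) = ∑_j ∑_J m(J)·Wd^{ij}_{KJ}·u_j(J)`. -/
noncomputable def pot (M : Fin d → ℕ) [∀ ℓ, NeZero (M ℓ)] {n : ℕ}
    (Wd : Fin n → Fin n → Cell M → Cell M → ℝ) (u : Fin n → Cell M → ℝ)
    (i : Fin n) (K : Cell M) : ℝ :=
  ∑ j, ∑ J : Cell M, mK M * Wd i j K J * u j J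

/-- Discrete `L^q` norm of a cell function. -/
noncomputable def normq (M : Fin d → ℕ) [∀ ℓ, NeZero (M ℓ)] (q : ℝ)
    (u : Cell M → ℝ) : ℝ :=
  (∑ K : Cell M, mK M * |u K| ^ q) ^ (1/q)

/-- Discrete `L^q` norm of an edge function (dual-cell measure `m(Δ_σ) = m(σ)·d_σ = m(K)`). -/
noncomputable def enorm (M : Fin d → ℕ) [∀ ℓ, NeZero (M ℓ)] (q : ℝ)
    (w : Cell M → Fin d → ℝ) : ℝ :=
  (∑ K : Cell M, ∑ ℓ : Fin d, mK M * |w K ℓ| ^ q) ^ (1/q)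

/-- Magnitude of the discrete gradient on the edge `(K,ℓ)`:
`|∇^h_σ v| = d·D_σ v/d_σ`. -/
noncomputable def gradh (M : Fin d → ℕ) (v : Cell M → ℝ) (K : Cell M) (ℓ : Fin d) : ℝ :=
  d * (M ℓ : ℝ) * |v (shift M K ℓ 1) - v K|


section KernelAux

lemma SGaux_coe_equivIco_eq_self {t : ℝ} (ht : t ∈ Set.Ico (0:ℝ) 1) :
    ((AddCircle.equivIco 1 0 (t : AddCircle (1:ℝ))) : ℝ) = t := by
  have h : (AddCircle.equivIco 1 0 (t : AddCircle (1:ℝ)))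
      = ⟨toIcoMod one_pos 0 t, toIcoMod_mem_Ico one_pos 0 t⟩ :=
    QuotientAddGroup.equivIcoMod_coe one_pos 0 t
  rw [h]
  exact (toIcoMod_eq_self one_pos).mpr (by simpa using ht)

lemma SGaux_measurableSet_arc {a b : ℝ} (hab : Set.Ico a b ⊆ Set.Ico (0:ℝ) 1) :
    MeasurableSet ((fun t : ℝ => (t : AddCircle (1:ℝ))) '' Set.Ico a b) := by
  have himg : (fun t : ℝ => (t : AddCircle (1:ℝ))) '' Set.Ico a b
      = (fun x : AddCircle (1:ℝ) => ((AddCircle.equivIco 1 0 x : ℝ))) ⁻¹' Set.Ico a b := by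
    ext x
    simp only [Set.mem_image, Set.mem_preimage]
    constructor
    · rintro ⟨t, ht, rfl⟩
      rw [SGaux_coe_equivIco_eq_self (hab ht)]; exact ht
    · intro hx
      exact ⟨_, hx, (AddCircle.equivIco 1 0).symm_apply_apply x⟩
  rw [himg]
  exact (measurable_subtype_coe.comp (AddCircle.measurableEquivIco 1 0).measurable)
    measurableSet_Ico

lemma SGaux_measurableSet_QK (M : Fin d → ℕ) [∀ ℓ, NeZero (M ℓ)] (K : Cell M) :
    MeasurableSet (QK M K) := by
  refine MeasurableSet.univ_pi fun ℓ => SGaux_measurableSet_arc ?_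
  rintro t ⟨ht0, ht1⟩
  have hM : (0:ℝ) < M ℓ := by
    exact_mod_cast Nat.pos_of_ne_zero (NeZero.ne (M ℓ))
  have hval : ((K ℓ).val : ℝ) + 1 ≤ (M ℓ : ℝ) := by
    exact_mod_cast Nat.succ_le_of_lt (ZMod.val_lt (K ℓ))
  refine ⟨le_trans (div_nonneg (Nat.cast_nonneg _) hM.le) ht0, lt_of_lt_of_le ht1 ?_⟩
  calc (((K ℓ).val : ℝ) + 1) / (M ℓ) ≤ (M ℓ : ℝ) / (M ℓ) := by gcongr
    _ = 1 := div_self hM.ne'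

lemma SGaux_mK_pos (M : Fin d → ℕ) [∀ ℓ, NeZero (M ℓ)] : 0 < mK M := by
  apply Finset.prod_pos
  intro ℓ _
  have : (0:ℝ) < M ℓ := by exact_mod_cast Nat.pos_of_ne_zero (NeZero.ne (M ℓ))
  positivity

lemma SGaux_integrable_sub {W : Td d → ℝ} (hW : MeasureTheory.Integrable W) :
    MeasureTheory.Integrable (fun p : Td d × Td d => W (p.1 - p.2))
      ((volume : Measure (Td d)).prod volume) := by
  have h1 : MeasureTheory.Integrable (fun p : Td d × Td d => W p.1 * 1)
      ((volume : Measure (Td d)).prod volume) :=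
    hW.mul_prod (integrable_const 1)
  simp only [mul_one] at h1
  have hmp := measurePreserving_sub_prod (volume : Measure (Td d)) volume
  have := (hmp.integrable_comp (h1.aestronglyMeasurable)).mpr h1
  simpa [Function.comp_def] using this

lemma SGaux_restr_le (M : Fin d → ℕ) [∀ ℓ, NeZero (M ℓ)] (K J : Cell M) :
    (((volume : Measure (Td d)).restrict (QK M K)).prod
      ((volume : Measure (Td d)).restrict (QK M J)))
      ≤ (volume : Measure (Td d)).prod volume := by
  rw [Measure.prod_restrict]; exact Measure.restrict_le_self

lemma SGaux_setint (M : Fin d → ℕ) [∀ ℓ, NeZero (M ℓ)] {W : Td d → ℝ}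
    (hW : MeasureTheory.Integrable W) (K J : Cell M) :
    (∫ p : Td d × Td d,
        Set.indicator ((QK M K) ×ˢ (QK M J)) (fun p : Td d × Td d => W (p.1 - p.2)) p
        ∂((volume : Measure (Td d)).prod volume))
      = ∫ x in QK M K, ∫ y in QK M J, W (x - y) := by
  rw [MeasureTheory.integral_indicator
    ((SGaux_measurableSet_QK M K).prod (SGaux_measurableSet_QK M J))]
  have h := MeasureTheory.integral_integral (f := fun x y => W (x - y))
    ((SGaux_integrable_sub hW).mono_measure (SGaux_restr_le M K J))
  rw [Measure.prod_restrict] at h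
  exact h.symm

lemma SGaux_Wdisc_eq (M : Fin d → ℕ) [∀ ℓ, NeZero (M ℓ)] (W : Td d → ℝ) (K J : Cell M) :
    mK M * mK M * Wdisc M W K J = ∫ x in QK M K, ∫ y in QK M J, W (x - y) := by
  have h0 := SGaux_mK_pos M
  rw [Wdisc, mul_inv_cancel_left₀ (mul_pos h0 h0).ne']

lemma SGaux_symm (M : Fin d → ℕ) [∀ ℓ, NeZero (M ℓ)] {W W' : Td d → ℝ}
    (hW : MeasureTheory.Integrable W) (hW' : MeasureTheory.Integrable W')
    (hsymm : ∀ᵐ x : Td d, W x = W' (-x)) (K J : Cell M) :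
    Wdisc M W K J = Wdisc M W' J K := by
  rw [Wdisc, Wdisc]
  congr 1
  set μ := (volume : Measure (Td d)) with hμ
  have hint1 : MeasureTheory.Integrable (fun p : Td d × Td d => W (p.1 - p.2))
      ((μ.restrict (QK M K)).prod (μ.restrict (QK M J))) :=
    (SGaux_integrable_sub hW).mono_measure (SGaux_restr_le M K J)
  have hintW' : MeasureTheory.Integrable (fun p : Td d × Td d => W' (p.2 - p.1)) (μ.prod μ) := by
    have := ((Measure.measurePreserving_swap (μ := μ) (ν := μ)).integrable_comp
      ((SGaux_integrable_sub hW').aestronglyMeasurable)).mpr (SGaux_integrable_sub hW')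
    simpa [Function.comp_def] using this
  have hint2 : MeasureTheory.Integrable (fun p : Td d × Td d => W' (p.2 - p.1))
      ((μ.restrict (QK M K)).prod (μ.restrict (QK M J))) :=
    hintW'.mono_measure (SGaux_restr_le M K J)
  have hq : Measure.QuasiMeasurePreserving (fun p : Td d × Td d => p.1 - p.2) (μ.prod μ) μ :=
    quasiMeasurePreserving_sub_of_right_invariant μ μ
  have haefull : ∀ᵐ p ∂(μ.prod μ), W (p.1 - p.2) = W' (p.2 - p.1) := by
    filter_upwards [hq.ae hsymm] with p hp
    rw [hp, neg_sub]
  have hae : ∀ᵐ p ∂((μ.restrict (QK M K)).prod (μ.restrict (QK M J))),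
      W (p.1 - p.2) = W' (p.2 - p.1) := by
    rw [Measure.prod_restrict]
    exact MeasureTheory.ae_restrict_of_ae haefull
  calc ∫ x in QK M K, ∫ y in QK M J, W (x - y)
      = ∫ p, W (p.1 - p.2) ∂((μ.restrict (QK M K)).prod (μ.restrict (QK M J))) :=
        MeasureTheory.integral_integral hint1
    _ = ∫ p, W' (p.2 - p.1) ∂((μ.restrict (QK M K)).prod (μ.restrict (QK M J))) :=
        MeasureTheory.integral_congr_ae hae
    _ = ∫ y in QK M J, ∫ x in QK M K, W' (y - x) :=
        MeasureTheory.integral_prod_symm _ hint2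

end KernelAux


/-- symmetry and positive semidefiniteness of the kernels transfer to
the discrete kernels. -/
theorem discrete_kernel_symmetry_and_psd {d n : ℕ} (M : Fin d → ℕ)
    [∀ ℓ, NeZero (M ℓ)]
    (W : Fin n → Fin n → Td d → ℝ)
    (hW : ∀ i j, MeasureTheory.Integrable (W i j)) :
    ((∀ i j, ∀ᵐ x : Td d, W i j x = W j i (-x)) →
      ∀ i j, ∀ K J : Cell M, Wdisc M (W i j) K J = Wdisc M (W j i) J K) ∧
    ((∀ v : Fin n → Td d → ℝ, (∀ i, MeasureTheory.MemLp (v i) 2) →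
        0 ≤ ∑ i, ∑ j, ∫ x : Td d, ∫ y : Td d, W i j (x - y) * v i x * v j y) →
      ∀ v : Fin n → Cell M → ℝ,
        0 ≤ ∑ i, ∑ j, ∑ K : Cell M, ∑ J : Cell M,
              mK M * mK M * Wdisc M (W i j) K J * v i K * v j J) := by
  constructor
  · intro hsymm i j K J
    exact SGaux_symm M (hW i j) (hW j i) (hsymm i j) K J
  · intro hpos v
    set μ := (volume : Measure (Td d)) with hμ
    -- the step functions
    set vt : Fin n → Td d → ℝ :=
      fun i x => ∑ K : Cell M, Set.indicator (QK M K) (fun _ => v i K) x with hvt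
    have hmem : ∀ i, MeasureTheory.MemLp (vt i) 2 := by
      intro i
      exact memLp_finset_sum _ fun K _ =>
        MeasureTheory.memLp_indicator_const 2 (SGaux_measurableSet_QK M K) (v i K)
          (Or.inr (measure_ne_top _ _))
    have key := hpos vt hmem
    have heq : ∀ i j : Fin n,
        (∫ x : Td d, ∫ y : Td d, W i j (x - y) * vt i x * vt j y)
          = ∑ K : Cell M, ∑ J : Cell M,
              mK M * mK M * Wdisc M (W i j) K J * v i K * v j J := by
      intro i j
      -- decompose the integrand as a finite sum of indicator functions on products
      have hdecomp : ∀ p : Td d × Td d,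
          W i j (p.1 - p.2) * vt i p.1 * vt j p.2
            = ∑ K : Cell M, ∑ J : Cell M,
                Set.indicator ((QK M K) ×ˢ (QK M J))
                  (fun q : Td d × Td d => v i K * v j J * W i j (q.1 - q.2)) p := by
        intro p
        have : vt i p.1 * vt j p.2
            = ∑ K : Cell M, ∑ J : Cell M,
                (Set.indicator (QK M K) (fun _ => v i K) p.1)
                  * (Set.indicator (QK M J) (fun _ => v j J) p.2) := by
          rw [hvt]
          rw [Finset.sum_mul_sum]
        rw [mul_assoc, this, Finset.mul_sum]
        refine Finset.sum_congr rfl fun K _ => ?_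
        rw [Finset.mul_sum]
        refine Finset.sum_congr rfl fun J _ => ?_
        by_cases hK : p.1 ∈ QK M K <;> by_cases hJ : p.2 ∈ QK M J <;>
          simp [Set.indicator_of_mem, Set.indicator_of_notMem, hK, hJ,
            Set.mem_prod, Set.indicator_apply]
        all_goals ring
      have hintKJ : ∀ K J : Cell M,
          MeasureTheory.Integrable
            (fun p : Td d × Td d =>
              Set.indicator ((QK M K) ×ˢ (QK M J))
                (fun q : Td d × Td d => v i K * v j J * W i j (q.1 - q.2)) p)
            (μ.prod μ) := by
        intro K J
        exact (((SGaux_integrable_sub (hW i j)).const_mul (v i K * v j J)).congr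
            (Filter.Eventually.of_forall fun p => by ring)).indicator
          ((SGaux_measurableSet_QK M K).prod (SGaux_measurableSet_QK M J))
      have hintG : MeasureTheory.Integrable
          (fun p : Td d × Td d => W i j (p.1 - p.2) * vt i p.1 * vt j p.2) (μ.prod μ) := by
        rw [show (fun p : Td d × Td d => W i j (p.1 - p.2) * vt i p.1 * vt j p.2)
            = fun p => ∑ K : Cell M, ∑ J : Cell M,
                Set.indicator ((QK M K) ×ˢ (QK M J))
                  (fun q : Td d × Td d => v i K * v j J * W i j (q.1 - q.2)) p
          from funext hdecomp]
        exact MeasureTheory.integrable_finset_sum _ fun K _ =>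
          MeasureTheory.integrable_finset_sum _ fun J _ => hintKJ K J
      calc (∫ x : Td d, ∫ y : Td d, W i j (x - y) * vt i x * vt j y)
          = ∫ p : Td d × Td d, W i j (p.1 - p.2) * vt i p.1 * vt j p.2 ∂(μ.prod μ) :=
            MeasureTheory.integral_integral hintG
        _ = ∫ p : Td d × Td d, (∑ K : Cell M, ∑ J : Cell M,
              Set.indicator ((QK M K) ×ˢ (QK M J))
                (fun q : Td d × Td d => v i K * v j J * W i j (q.1 - q.2)) p) ∂(μ.prod μ) := by
            exact MeasureTheory.integral_congr_ae
              (Filter.Eventually.of_forall hdecomp)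
        _ = ∑ K : Cell M, ∑ J : Cell M, ∫ p : Td d × Td d,
              Set.indicator ((QK M K) ×ˢ (QK M J))
                (fun q : Td d × Td d => v i K * v j J * W i j (q.1 - q.2)) p ∂(μ.prod μ) := by
            rw [MeasureTheory.integral_finset_sum _ fun K _ =>
              MeasureTheory.integrable_finset_sum _ fun J _ => hintKJ K J]
            exact Finset.sum_congr rfl fun K _ =>
              MeasureTheory.integral_finset_sum _ fun J _ => hintKJ K J
        _ = ∑ K : Cell M, ∑ J : Cell M,
              mK M * mK M * Wdisc M (W i j) K J * v i K * v j J := by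
            refine Finset.sum_congr rfl fun K _ => Finset.sum_congr rfl fun J _ => ?_
            have h1 : ∀ p : Td d × Td d,
                Set.indicator ((QK M K) ×ˢ (QK M J))
                  (fun q : Td d × Td d => v i K * v j J * W i j (q.1 - q.2)) p
                = (v i K * v j J) * Set.indicator ((QK M K) ×ˢ (QK M J))
                    (fun q : Td d × Td d => W i j (q.1 - q.2)) p := by
              intro p
              by_cases hp : p ∈ (QK M K) ×ˢ (QK M J) <;>
                simp [Set.indicator_of_mem, Set.indicator_of_notMem, hp]
            rw [MeasureTheory.integral_congr_ae (Filter.Eventually.of_forall h1),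
              MeasureTheory.integral_const_mul, SGaux_setint M (hW i j) K J,
              ← SGaux_Wdisc_eq M (W i j) K J]
            ring
    calc (0:ℝ) ≤ ∑ i, ∑ j, ∫ x : Td d, ∫ y : Td d, W i j (x - y) * vt i x * vt j y := key
      _ = ∑ i, ∑ j, ∑ K : Cell M, ∑ J : Cell M,
            mK M * mK M * Wdisc M (W i j) K J * v i K * v j J :=
          Finset.sum_congr rfl fun i _ => Finset.sum_congr rfl fun j _ => heq i j


end SG
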